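/- Let u : Ω → ℝ be a harmonic function on an axially-symmetric domain Ω ⊂ ℝ⁴ (invariant under orthogonal transformations of the first three coordinates) that is axially symmetric, i.e. u(x₁,x₂,x₃,y) = w(√(x₁²+x₂²+x₃²), y) for some function w. Let Ω̃ = {(ρ, h) ∈ ℝ² : (x, h) ∈ Ω for some x ∈ ℝ³ with |x| = |ρ|}. Then ṽ(ρ, h) := ρ w(|ρ|, h) extends to a harmonic function on Ω̃ which is odd in ρ. -/

import Mathlib

/-- Harmonicity on a subset of `ℝⁿ` (Euclidean space): `C²` and vanishing Laplacian. -/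
def HarmonicOnE {n : ℕ} (u : EuclideanSpace ℝ (Fin n) → ℝ)
    (s : Set (EuclideanSpace ℝ (Fin n))) : Prop :=
  ContDiffOn ℝ 2 u s ∧ ∀ x ∈ s,
    (∑ i : Fin n, fderiv ℝ (fun y => fderiv ℝ u y (EuclideanSpace.single i 1)) x
      (EuclideanSpace.single i 1)) = 0

/-- Partial derivative in the first coordinate of a function on `ℝ × ℝ`. -/
noncomputable def pd1 (u : ℝ × ℝ → ℝ) (p : ℝ × ℝ) : ℝ := fderiv ℝ u p (1, 0)

/-- Partial derivative in the second coordinate of a function on `ℝ × ℝ`. -/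
noncomputable def pd2 (u : ℝ × ℝ → ℝ) (p : ℝ × ℝ) : ℝ := fderiv ℝ u p (0, 1)

/-- Harmonicity on a subset of `ℝ²`: `C²` and vanishing Laplacian. -/
def HarmonicOn2 (u : ℝ × ℝ → ℝ) (s : Set (ℝ × ℝ)) : Prop :=
  ContDiffOn ℝ 2 u s ∧ ∀ p ∈ s, pd1 (pd1 u) p + pd2 (pd2 u) p = 0

/-- The radius in the first three coordinates of a point of `ℝ⁴`. -/
noncomputable def rad4 (p : EuclideanSpace ℝ (Fin 4)) : ℝ :=
  Real.sqrt ((p 0) ^ 2 + (p 1) ^ 2 + (p 2) ^ 2)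


noncomputable def eMap : (ℝ × ℝ) →L[ℝ] EuclideanSpace ℝ (Fin 4) :=
  (ContinuousLinearMap.fst ℝ ℝ ℝ).smulRight (EuclideanSpace.single 0 1) +
  (ContinuousLinearMap.snd ℝ ℝ ℝ).smulRight (EuclideanSpace.single 3 1)

lemma eMap_apply (q : ℝ × ℝ) (i : Fin 4) :
    eMap q i = if i = 0 then q.1 else if i = 3 then q.2 else 0 := by
  fin_cases i <;>
    simp [eMap, EuclideanSpace.single_apply, PiLp.add_apply, PiLp.smul_apply]

noncomputable def rotGen (j : Fin 4) :
    EuclideanSpace ℝ (Fin 4) →L[ℝ] EuclideanSpace ℝ (Fin 4) :=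
  (EuclideanSpace.proj (0 : Fin 4)).smulRight (EuclideanSpace.single j 1)
    - (EuclideanSpace.proj j).smulRight (EuclideanSpace.single 0 1)

lemma rotGen_apply (j : Fin 4) (x : EuclideanSpace ℝ (Fin 4)) :
    rotGen j x = x 0 • EuclideanSpace.single j 1 - x j • EuclideanSpace.single 0 1 := by
  simp [rotGen]

lemma rad4_eMap (q : ℝ × ℝ) : rad4 (eMap q) = |q.1| := by
  simp [rad4, eMap_apply, Real.sqrt_sq_eq_abs]
lemma hasDerivAt_rotCurve (j : Fin 4) (x : EuclideanSpace ℝ (Fin 4)) :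
    HasDerivAt (fun θ : ℝ => x
      + ((Real.cos θ - 1) * x 0 - Real.sin θ * x j) • EuclideanSpace.single (0 : Fin 4) (1:ℝ)
      + (Real.sin θ * x 0 + (Real.cos θ - 1) * x j) • EuclideanSpace.single j (1:ℝ))
      (rotGen j x) 0 := by
  have hf : HasDerivAt (fun θ : ℝ => (Real.cos θ - 1) * x 0 - Real.sin θ * x j) (-(x j)) 0 := by
    have := (((Real.hasDerivAt_cos 0).sub_const 1).mul_const (x 0)).sub
      ((Real.hasDerivAt_sin 0).mul_const (x j))
    exact this.congr_deriv (by simp)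
  have hg : HasDerivAt (fun θ : ℝ => Real.sin θ * x 0 + (Real.cos θ - 1) * x j) (x 0) 0 := by
    have := ((Real.hasDerivAt_sin 0).mul_const (x 0)).add
      (((Real.hasDerivAt_cos 0).sub_const 1).mul_const (x j))
    exact this.congr_deriv (by simp)
  have := ((hasDerivAt_const (0:ℝ) x).add
      (hf.smul_const (EuclideanSpace.single (0:Fin 4) (1:ℝ)))).add
      (hg.smul_const (EuclideanSpace.single j (1:ℝ)))
  refine this.congr_deriv ?_
  rw [rotGen_apply]
  simp [neg_smul]
  abel
lemma rot_deriv_zero {Ω : Set (EuclideanSpace ℝ (Fin 4))} (hΩopen : IsOpen Ω)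
    (hΩsym : ∀ p ∈ Ω, ∀ q : EuclideanSpace ℝ (Fin 4),
      rad4 q = rad4 p → q 3 = p 3 → q ∈ Ω)
    {u : EuclideanSpace ℝ (Fin 4) → ℝ} (hC2 : ContDiffOn ℝ 2 u Ω)
    {w : ℝ → ℝ → ℝ} (hw : ∀ p ∈ Ω, u p = w (rad4 p) (p 3))
    (j : Fin 4) (hj : j = 1 ∨ j = 2) {x : EuclideanSpace ℝ (Fin 4)} (hx : x ∈ Ω) :
    fderiv ℝ u x (rotGen j x) = 0 := by
  set c : ℝ → EuclideanSpace ℝ (Fin 4) := fun θ => x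
      + ((Real.cos θ - 1) * x 0 - Real.sin θ * x j) • EuclideanSpace.single (0 : Fin 4) (1:ℝ)
      + (Real.sin θ * x 0 + (Real.cos θ - 1) * x j) • EuclideanSpace.single j (1:ℝ) with hc
  have happ : ∀ θ (i : Fin 4), c θ i = x i
      + ((Real.cos θ - 1) * x 0 - Real.sin θ * x j) * (if i = 0 then 1 else 0)
      + (Real.sin θ * x 0 + (Real.cos θ - 1) * x j) * (if i = j then 1 else 0) := by
    intro θ i
    simp [hc, PiLp.add_apply, PiLp.smul_apply, EuclideanSpace.single_apply, smul_eq_mul]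
  have hrad : ∀ θ, rad4 (c θ) = rad4 x := by
    intro θ
    have hs := Real.sin_sq_add_cos_sq θ
    unfold rad4
    rcases hj with rfl | rfl
    · rw [happ, happ, happ]
      simp only [Fin.isValue, Fin.reduceEq, if_true, if_false, ite_true, ite_false,
        mul_one, mul_zero, add_zero, ↓reduceIte]
      congr 1
      linear_combination (x 0 ^ 2 + x 1 ^ 2) * hs
    · rw [happ, happ, happ]
      simp only [Fin.isValue, Fin.reduceEq, if_true, if_false, ite_true, ite_false,
        mul_one, mul_zero, add_zero, ↓reduceIte]
      congr 1
      linear_combination (x 0 ^ 2 + x 2 ^ 2) * hs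
  have hc3 : ∀ θ, c θ 3 = x 3 := by
    intro θ; rcases hj with rfl | rfl <;> · rw [happ]; simp
  have hmem : ∀ θ, c θ ∈ Ω := fun θ => hΩsym x hx _ (hrad θ) (hc3 θ)
  have hconst : ∀ θ, u (c θ) = w (rad4 x) (x 3) := fun θ => by
    rw [hw _ (hmem θ), hrad, hc3]
  have hc0 : c 0 = x := by simp [hc]
  have hu' : HasFDerivAt u (fderiv ℝ u x) x :=
    ((hC2.differentiableOn (by norm_num)).differentiableAt
      (hΩopen.mem_nhds hx)).hasFDerivAt
  have hder : HasDerivAt c (rotGen j x) 0 := hasDerivAt_rotCurve j x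
  rw [← hc0] at hu'
  have hcomp : HasDerivAt (fun θ => u (c θ)) (fderiv ℝ u x (rotGen j x)) 0 := by
    have h := hu'.comp_hasDerivAt 0 hder
    rw [hc0] at h
    exact h
  have h2 : HasDerivAt (fun _ : ℝ => w (rad4 x) (x 3)) (fderiv ℝ u x (rotGen j x)) 0 := by
    convert hcomp using 1
    exact funext fun θ => (hconst θ).symm
  exact (h2.unique (hasDerivAt_const 0 _))
lemma rot_second {Ω : Set (EuclideanSpace ℝ (Fin 4))} (hΩopen : IsOpen Ω)
    (hΩsym : ∀ p ∈ Ω, ∀ q : EuclideanSpace ℝ (Fin 4),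
      rad4 q = rad4 p → q 3 = p 3 → q ∈ Ω)
    {u : EuclideanSpace ℝ (Fin 4) → ℝ} (hC2 : ContDiffOn ℝ 2 u Ω)
    {w : ℝ → ℝ → ℝ} (hw : ∀ p ∈ Ω, u p = w (rad4 p) (p 3))
    (j : Fin 4) (hj : j = 1 ∨ j = 2) {x : EuclideanSpace ℝ (Fin 4)} (hx : x ∈ Ω)
    (hxj : x j = 0) :
    fderiv ℝ u x (EuclideanSpace.single 0 1) =
      x 0 * (fderiv ℝ (fderiv ℝ u) x (EuclideanSpace.single j 1))
        (EuclideanSpace.single j 1) := by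
  have hfd : ContDiffOn ℝ 1 (fderiv ℝ u) Ω := hC2.fderiv_of_isOpen hΩopen (by norm_num)
  have hDx : DifferentiableAt ℝ (fderiv ℝ u) x :=
    (hfd.differentiableOn one_ne_zero).differentiableAt (hΩopen.mem_nhds hx)
  have hpsi0 : (fun y => fderiv ℝ u y (rotGen j y)) =ᶠ[nhds x] fun _ => (0:ℝ) :=
    Filter.eventuallyEq_of_mem (hΩopen.mem_nhds hx)
      (fun y hy => rot_deriv_zero hΩopen hΩsym hC2 hw j hj hy)
  have h1 : fderiv ℝ (fun y => fderiv ℝ u y (rotGen j y)) x = 0 := by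
    rw [hpsi0.fderiv_eq]; exact fderiv_const_apply 0
  have h2 := fderiv_clm_apply (𝕜 := ℝ) (c := fderiv ℝ u) (u := fun y => rotGen j y)
    hDx ((rotGen j).differentiableAt)
  rw [(rotGen j).fderiv, h1] at h2
  have h4 := congrArg (fun L : EuclideanSpace ℝ (Fin 4) →L[ℝ] ℝ =>
    L (EuclideanSpace.single j (1:ℝ))) h2.symm
  simp only [ContinuousLinearMap.add_apply, ContinuousLinearMap.comp_apply,
    ContinuousLinearMap.flip_apply, ContinuousLinearMap.zero_apply] at h4
  have e1 : rotGen j (EuclideanSpace.single j (1:ℝ)) = -EuclideanSpace.single 0 1 := by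
    rw [rotGen_apply]
    rcases hj with rfl | rfl <;> simp [EuclideanSpace.single_apply]
  have e2 : rotGen j x = x 0 • EuclideanSpace.single j (1:ℝ) := by
    rw [rotGen_apply, hxj]; simp
  rw [e1, e2] at h4
  simp only [map_neg, map_smul, smul_eq_mul] at h4
  linarith
lemma fderiv_clm_apply_const {E F G : Type*} [NormedAddCommGroup E] [NormedSpace ℝ E]
    [NormedAddCommGroup F] [NormedSpace ℝ F] [NormedAddCommGroup G] [NormedSpace ℝ G]
    {c : E → (F →L[ℝ] G)} {x : E} (hc : DifferentiableAt ℝ c x) (v : F) (m : E) :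
    fderiv ℝ (fun y => c y v) x m = (fderiv ℝ c x m) v := by
  rw [fderiv_clm_apply hc (differentiableAt_const v)]
  simp

lemma eMap3 (q : ℝ × ℝ) : eMap q 3 = q.2 := by simp [eMap_apply]
lemma eMap1 (q : ℝ × ℝ) : eMap q 1 = 0 := by simp [eMap_apply]
lemma eMap2 (q : ℝ × ℝ) : eMap q 2 = 0 := by simp [eMap_apply]
lemma eMap0 (q : ℝ × ℝ) : eMap q 0 = q.1 := by simp [eMap_apply]

lemma heM10 : eMap ((1:ℝ),(0:ℝ)) = EuclideanSpace.single (0:Fin 4) (1:ℝ) :=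
  by ext i; fin_cases i <;> simp [eMap_apply, EuclideanSpace.single_apply]

lemma heM01 : eMap ((0:ℝ),(1:ℝ)) = EuclideanSpace.single (3:Fin 4) (1:ℝ) :=
  by ext i; fin_cases i <;> simp [eMap_apply, EuclideanSpace.single_apply]

/-- If `u` is an axially-symmetric harmonic function on an axially-symmetric domain
`Ω ⊆ ℝ⁴`, say `u(x,y) = w(|x|, y)`, then `ṽ(ρ,h) = ρ w(|ρ|,h)` is a harmonic function
on `Ω̃ = {(ρ,h) : (x,h) ∈ Ω for some x with |x| = |ρ|}` which is odd in `ρ`. -/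
theorem stmt5 (Ω : Set (EuclideanSpace ℝ (Fin 4))) (hΩopen : IsOpen Ω)
    (hΩsym : ∀ p ∈ Ω, ∀ q : EuclideanSpace ℝ (Fin 4),
      rad4 q = rad4 p → q 3 = p 3 → q ∈ Ω)
    (u : EuclideanSpace ℝ (Fin 4) → ℝ) (hu : HarmonicOnE u Ω)
    (w : ℝ → ℝ → ℝ) (hw : ∀ p ∈ Ω, u p = w (rad4 p) (p 3)) :
    HarmonicOn2 (fun q => q.1 * w |q.1| q.2)
        {q : ℝ × ℝ | ∃ p ∈ Ω, rad4 p = |q.1| ∧ p 3 = q.2} ∧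
      ∀ q : ℝ × ℝ, (-q.1) * w |(-q.1)| q.2 = -(q.1 * w |q.1| q.2) := by
  refine ⟨?_, fun q => by rw [abs_neg]; ring⟩
  set v : ℝ × ℝ → ℝ := fun q => q.1 * w |q.1| q.2 with hv
  set S : Set (ℝ × ℝ) := {q : ℝ × ℝ | ∃ p ∈ Ω, rad4 p = |q.1| ∧ p 3 = q.2} with hSdef
  have hS : S = eMap ⁻¹' Ω := by
    ext q
    constructor
    · rintro ⟨p, hp, hr, h3⟩
      exact hΩsym p hp (eMap q) (by rw [rad4_eMap, ← hr]) (by rw [eMap3, ← h3])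
    · intro hq
      exact ⟨eMap q, hq, rad4_eMap q, eMap3 q⟩
  have hSopen : IsOpen S := by rw [hS]; exact hΩopen.preimage eMap.continuous
  have hmem : ∀ {q : ℝ × ℝ}, q ∈ S → eMap q ∈ Ω := fun {q} hq => by rw [hS] at hq; exact hq
  have hud : ∀ x ∈ Ω, DifferentiableAt ℝ u x := fun x hx =>
    (hu.1.differentiableOn (by norm_num)).differentiableAt (hΩopen.mem_nhds hx)
  have hfd : ContDiffOn ℝ 1 (fderiv ℝ u) Ω := hu.1.fderiv_of_isOpen hΩopen (by norm_num)
  have hDud : ∀ x ∈ Ω, DifferentiableAt ℝ (fderiv ℝ u) x := fun x hx =>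
    (hfd.differentiableOn one_ne_zero).differentiableAt (hΩopen.mem_nhds hx)
  set g : ℝ × ℝ → ℝ := fun q => u (eMap q) with hg
  have hveq : Set.EqOn v (fun q => q.1 * g q) S := by
    intro q hq
    have h := hw (eMap q) (hmem hq)
    rw [rad4_eMap, eMap3] at h
    simp only [hv, hg, h]
  -- smoothness
  have hgS : ContDiffOn ℝ 2 g S := by
    have := hu.1.comp (eMap.contDiff.contDiffOn (s := S)) (fun q hq => hmem hq)
    exact this
  have hvC2 : ContDiffOn ℝ 2 v S :=
    (((contDiff_fst.of_le le_top).contDiffOn).mul hgS).congr hveq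
  refine ⟨hvC2, ?_⟩
  -- Laplacian
  intro p hp
  have ha : eMap p ∈ Ω := hmem hp
  set a : EuclideanSpace ℝ (Fin 4) := eMap p with hadef
  set N : ℝ × ℝ → (EuclideanSpace ℝ (Fin 4) →L[ℝ] ℝ) := fun q => fderiv ℝ u (eMap q) with hN
  have hNd : DifferentiableAt ℝ N p := (hDud a ha).comp p eMap.differentiableAt
  have hNf : fderiv ℝ N p = (fderiv ℝ (fderiv ℝ u) a).comp eMap := by
    rw [hN, show (fun q => fderiv ℝ u (eMap q)) = (fderiv ℝ u) ∘ eMap from rfl,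
      fderiv_comp p (hDud a ha) eMap.differentiableAt, eMap.fderiv]
  have hgd : ∀ q ∈ S, DifferentiableAt ℝ g q := fun q hq =>
    (hud _ (hmem hq)).comp q eMap.differentiableAt
  have hgfd : ∀ q ∈ S, fderiv ℝ g q = (N q).comp eMap := by
    intro q hq
    rw [hg, show (fun q => u (eMap q)) = u ∘ eMap from rfl,
      fderiv_comp q (hud _ (hmem hq)) eMap.differentiableAt, eMap.fderiv, hN]
  set G1 : ℝ × ℝ → ℝ := fun q => N q (eMap ((1:ℝ),(0:ℝ))) with hG1
  set G2 : ℝ × ℝ → ℝ := fun q => N q (eMap ((0:ℝ),(1:ℝ))) with hG2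
  have hpd1 : Set.EqOn (pd1 v) (fun q => q.1 * G1 q + g q) S := by
    intro q hq
    have hev : v =ᶠ[nhds q] fun q => q.1 * g q :=
      Filter.eventuallyEq_of_mem (hSopen.mem_nhds hq) hveq
    show fderiv ℝ v q (1, 0) = _
    rw [hev.fderiv_eq, fderiv_fun_mul differentiableAt_fst (hgd q hq)]
    simp only [ContinuousLinearMap.add_apply, ContinuousLinearMap.smul_apply, smul_eq_mul]
    rw [hgfd q hq, fderiv_fst]
    simp [hG1]
  have hpd2 : Set.EqOn (pd2 v) (fun q => q.1 * G2 q) S := by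
    intro q hq
    have hev : v =ᶠ[nhds q] fun q => q.1 * g q :=
      Filter.eventuallyEq_of_mem (hSopen.mem_nhds hq) hveq
    show fderiv ℝ v q (0, 1) = _
    rw [hev.fderiv_eq, fderiv_fun_mul differentiableAt_fst (hgd q hq)]
    simp only [ContinuousLinearMap.add_apply, ContinuousLinearMap.smul_apply, smul_eq_mul]
    rw [hgfd q hq, fderiv_fst]
    simp [hG2]
  have hG1d : DifferentiableAt ℝ G1 p := hNd.clm_apply (differentiableAt_const _)
  have hG2d : DifferentiableAt ℝ G2 p := hNd.clm_apply (differentiableAt_const _)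
  have hG1f : ∀ m : ℝ × ℝ, fderiv ℝ G1 p m =
      (fderiv ℝ (fderiv ℝ u) a (eMap m)) (eMap ((1:ℝ),(0:ℝ))) := by
    intro m
    rw [hG1, fderiv_clm_apply_const hNd _ m, hNf]
    rfl
  have hG2f : ∀ m : ℝ × ℝ, fderiv ℝ G2 p m =
      (fderiv ℝ (fderiv ℝ u) a (eMap m)) (eMap ((0:ℝ),(1:ℝ))) := by
    intro m
    rw [hG2, fderiv_clm_apply_const hNd _ m, hNf]
    rfl
  have h11 : pd1 (pd1 v) p =
      p.1 * (fderiv ℝ (fderiv ℝ u) a (EuclideanSpace.single 0 1)) (EuclideanSpace.single 0 1)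
        + G1 p + G1 p := by
    have hev : pd1 v =ᶠ[nhds p] fun q => q.1 * G1 q + g q :=
      Filter.eventuallyEq_of_mem (hSopen.mem_nhds hp) hpd1
    show fderiv ℝ (pd1 v) p (1, 0) = _
    rw [hev.fderiv_eq, fderiv_fun_add (f := fun q => q.1 * G1 q) (differentiableAt_fst.mul hG1d) (hgd p hp)]
    simp only [ContinuousLinearMap.add_apply]
    rw [fderiv_fun_mul differentiableAt_fst hG1d]
    simp only [ContinuousLinearMap.add_apply, ContinuousLinearMap.smul_apply, smul_eq_mul]
    rw [hgfd p hp, fderiv_fst, hG1f (1, 0), heM10]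
    simp [hG1, heM10]
  have h22 : pd2 (pd2 v) p =
      p.1 * (fderiv ℝ (fderiv ℝ u) a (EuclideanSpace.single 3 1)) (EuclideanSpace.single 3 1) := by
    have hev : pd2 v =ᶠ[nhds p] fun q => q.1 * G2 q :=
      Filter.eventuallyEq_of_mem (hSopen.mem_nhds hp) hpd2
    show fderiv ℝ (pd2 v) p (0, 1) = _
    rw [hev.fderiv_eq, fderiv_fun_mul differentiableAt_fst hG2d]
    simp only [ContinuousLinearMap.add_apply, ContinuousLinearMap.smul_apply, smul_eq_mul]
    rw [fderiv_fst, hG2f (0, 1), heM01]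
    simp
  -- the Laplace equation for u at a, in second-fderiv form
  have hlap := hu.2 a ha
  rw [Fin.sum_univ_four] at hlap
  rw [fderiv_clm_apply_const (hDud a ha), fderiv_clm_apply_const (hDud a ha),
    fderiv_clm_apply_const (hDud a ha), fderiv_clm_apply_const (hDud a ha)] at hlap
  -- rotation identities
  have hr1 := rot_second hΩopen hΩsym hu.1 hw 1 (Or.inl rfl) ha (by rw [hadef, eMap1])
  have hr2 := rot_second hΩopen hΩsym hu.1 hw 2 (Or.inr rfl) ha (by rw [hadef, eMap2])
  rw [hadef, eMap0] at hr1 hr2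
  have hG1val : G1 p = fderiv ℝ u a (EuclideanSpace.single 0 1) := by
    rw [hG1, heM10]
  rw [h11, h22, hG1val]
  rw [← hadef] at hr1 hr2
  linear_combination hr1 + hr2 + p.1 * hlap
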